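/- 3-SAT reduction correctness: let φ = C₁ ∧ … ∧ C_k be a 3-CNF formula over boolean variables t₁,…,t_n, each clause C_i = d_{i1} ∨ d_{i2} ∨ d_{i3} with literals d_{il} ∈ {t_j, ¬t_j}. Define the Markov chain M with AP = {C₁,…,C_k}, states S = {s₀,…,s_n} ∪ {t₁,…,t_n} ∪ {¬t₁,…,¬t_n}, transitions P(s_i,t_{i+1}) > 0 and P(s_i,¬t_{i+1}) > 0 for 0 ≤ i < n, P(t_i,s_i) = 1 and P(¬t_i,s_i) = 1 for 0 < i ≤ n, and P(s_n,s_n) = 1; labels C_i ∈ L(t_j) iff some literal of C_i is t_j, C_i ∈ L(¬t_j) iff some literal of C_i is ¬t_j, and L(s_j) = ∅ for all j. Let ψ = ◇_{≤y₁} C₁ ∧ … ∧ ◇_{≤y_k} C_k. Then φ is satisfiable (as a propositional formula) if and only if V_{>0}(ψ) ≠ ∅. -/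

import Mathlib

open MeasureTheory
open scoped ENNReal

/-- Auxiliary: the canonical path through the Markov chain induced by assignment `α`. -/
def threeSatPath (n : ℕ) (α : Fin n → Bool) (m : ℕ) : Fin (n + 1) ⊕ Fin n × Bool :=
  if hm : m / 2 < n then
    if m % 2 = 0 then Sum.inl (⟨m / 2, hm⟩ : Fin n).castSucc
    else Sum.inr (⟨m / 2, hm⟩, α ⟨m / 2, hm⟩)
  else Sum.inl (Fin.last n)

lemma threeSatPath_even {n m : ℕ} (α : Fin n → Bool) (hm : m / 2 < n) (hp : m % 2 = 0) :
    threeSatPath n α m = Sum.inl (⟨m / 2, hm⟩ : Fin n).castSucc := by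
  rw [threeSatPath, dif_pos hm, if_pos hp]

lemma threeSatPath_odd {n m : ℕ} (α : Fin n → Bool) (hm : m / 2 < n) (hp : m % 2 ≠ 0) :
    threeSatPath n α m = Sum.inr (⟨m / 2, hm⟩, α ⟨m / 2, hm⟩) := by
  rw [threeSatPath, dif_pos hm, if_neg hp]

lemma threeSatPath_big {n m : ℕ} (α : Fin n → Bool) (hm : ¬ m / 2 < n) :
    threeSatPath n α m = Sum.inl (Fin.last n) := by
  rw [threeSatPath, dif_neg hm]

theorem threeSat_reduction_correct (n k : ℕ)
    (clauses : Fin k → Fin 3 → Fin n × Bool)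
    (P : (Fin (n + 1) ⊕ Fin n × Bool) → (Fin (n + 1) ⊕ Fin n × Bool) → ℝ≥0∞)
    (hrow : ∀ s, ∑ t, P s t = 1)
    (hchoice : ∀ (i : Fin n) (b : Bool), 0 < P (Sum.inl i.castSucc) (Sum.inr (i, b)))
    (hback : ∀ (i : Fin n) (b : Bool), P (Sum.inr (i, b)) (Sum.inl i.succ) = 1)
    (hlast : P (Sum.inl (Fin.last n)) (Sum.inl (Fin.last n)) = 1)
    (hsupp : ∀ s t, 0 < P s t →
      (∃ (i : Fin n) (b : Bool), s = Sum.inl i.castSucc ∧ t = Sum.inr (i, b)) ∨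
      (∃ (i : Fin n) (b : Bool), s = Sum.inr (i, b) ∧ t = Sum.inl i.succ) ∨
      (s = Sum.inl (Fin.last n) ∧ t = Sum.inl (Fin.last n)))
    (Lab : (Fin (n + 1) ⊕ Fin n × Bool) → Set (Fin k))
    (hLs : ∀ j : Fin (n + 1), Lab (Sum.inl j) = ∅)
    (hLt : ∀ (j : Fin n) (b : Bool),
      Lab (Sum.inr (j, b)) = {i : Fin k | ∃ l : Fin 3, clauses i l = (j, b)})
    (μ : Measure (ℕ → (Fin (n + 1) ⊕ Fin n × Bool))) (hprob : IsProbabilityMeasure μ)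
    (hcyl : ∀ (N : ℕ) (u : ℕ → (Fin (n + 1) ⊕ Fin n × Bool)),
      μ {π | ∀ j ≤ N, π j = u j} =
        (if u 0 = Sum.inl (0 : Fin (n + 1)) then 1 else 0) *
          ∏ j ∈ Finset.range N, P (u j) (u (j + 1))) :
    (∃ α : Fin n → Bool,
        ∀ i : Fin k, ∃ l : Fin 3, α (clauses i l).1 = (clauses i l).2) ↔
      {v : Fin k → ℕ |
        0 < μ {π | ∀ i : Fin k, ∃ j ≤ v i, i ∈ Lab (π j)}}.Nonempty := by
  classical
  constructor
  · -- forward direction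
    rintro ⟨α, hα⟩
    refine ⟨fun _ => 2 * n, ?_⟩
    set u : ℕ → (Fin (n + 1) ⊕ Fin n × Bool) := threeSatPath n α with hu
    have hcylpos : 0 < μ {π | ∀ j ≤ 2 * n, π j = u j} := by
      rw [hcyl]
      have h0 : u 0 = Sum.inl (0 : Fin (n + 1)) := by
        by_cases hn : 0 < n
        · rw [hu, threeSatPath_even α (by omega) (by omega)]
          exact congrArg Sum.inl (Fin.ext (by simp))
        · have hn0 : n = 0 := by omega
          rw [hu, threeSatPath_big α (by omega)]
          subst hn0
          exact congrArg Sum.inl (Fin.ext (by simp [Fin.last]))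
      rw [if_pos h0, one_mul]
      refine CanonicallyOrderedAdd.prod_pos.mpr ?_
      intro m hm
      rw [Finset.mem_range] at hm
      by_cases hpar : m % 2 = 0
      · have hd : m / 2 < n := by omega
        have hd2 : (m + 1) / 2 < n := by omega
        rw [hu, threeSatPath_even α hd hpar, threeSatPath_odd α hd2 (by omega)]
        have e : (⟨(m + 1) / 2, hd2⟩ : Fin n) = ⟨m / 2, hd⟩ := by
          ext; simp; omega
        rw [e]
        exact hchoice _ _
      · have hd : m / 2 < n := by omega
        rw [hu, threeSatPath_odd α hd hpar]
        by_cases hd2 : (m + 1) / 2 < n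
        · rw [threeSatPath_even α hd2 (by omega)]
          have e : ((⟨(m + 1) / 2, hd2⟩ : Fin n)).castSucc = (⟨m / 2, hd⟩ : Fin n).succ := by
            ext; simp; omega
          rw [e, hback]
          exact zero_lt_one
        · rw [threeSatPath_big α hd2]
          have e : Fin.last n = (⟨m / 2, hd⟩ : Fin n).succ := by
            ext; simp; omega
          rw [e, hback]
          exact zero_lt_one
    refine lt_of_lt_of_le hcylpos (measure_mono ?_)
    intro π hπ i
    obtain ⟨l, hl⟩ := hα i
    have hlt := (clauses i l).1.isLt
    refine ⟨2 * ((clauses i l).1 : ℕ) + 1, by show 2 * ((clauses i l).1 : ℕ) + 1 ≤ 2 * n; omega, ?_⟩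
    have hj := hπ (2 * ((clauses i l).1 : ℕ) + 1) (by omega)
    rw [hj, hu, threeSatPath_odd α (by omega) (by omega)]
    have e : (⟨(2 * ((clauses i l).1 : ℕ) + 1) / 2, by omega⟩ : Fin n) = (clauses i l).1 := by
      ext; simp; omega
    rw [e, hLt]
    exact ⟨l, by rw [hl]⟩
  · -- backward direction
    rintro ⟨v, hv⟩
    have hvpos : 0 < μ {π : ℕ → (Fin (n + 1) ⊕ Fin n × Bool) |
        ∀ i : Fin k, ∃ j ≤ v i, i ∈ Lab (π j)} := hv
    -- the set of "non-paths" has measure zero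
    have hb0 : μ {π : ℕ → (Fin (n + 1) ⊕ Fin n × Bool) |
        π 0 ≠ Sum.inl (0 : Fin (n + 1))} = 0 := by
      have hsub0 : {π : ℕ → (Fin (n + 1) ⊕ Fin n × Bool) | π 0 ≠ Sum.inl (0 : Fin (n + 1))}
          ⊆ ⋃ s : {s : Fin (n + 1) ⊕ Fin n × Bool // s ≠ Sum.inl (0 : Fin (n + 1))},
            {π : ℕ → (Fin (n + 1) ⊕ Fin n × Bool) | π 0 = s.1} := by
        intro π hπ
        exact Set.mem_iUnion.mpr ⟨⟨π 0, hπ⟩, rfl⟩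
      refine measure_mono_null hsub0 (measure_iUnion_null ?_)
      rintro ⟨s, hs⟩
      have e : {π : ℕ → (Fin (n + 1) ⊕ Fin n × Bool) | π 0 = s}
          = {π | ∀ j ≤ 0, π j = (fun _ => s) j} := by
        ext π; simp [Nat.le_zero]
      rw [e, hcyl, if_neg hs, zero_mul]
    have hbj : ∀ j : ℕ, μ {π : ℕ → (Fin (n + 1) ⊕ Fin n × Bool) |
        P (π j) (π (j + 1)) = 0} = 0 := by
      intro j
      have hsubj : {π : ℕ → (Fin (n + 1) ⊕ Fin n × Bool) | P (π j) (π (j + 1)) = 0}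
          ⊆ ⋃ w : {w : Fin (j + 2) → (Fin (n + 1) ⊕ Fin n × Bool) //
            P (w ⟨j, by omega⟩) (w ⟨j + 1, by omega⟩) = 0},
            {π : ℕ → (Fin (n + 1) ⊕ Fin n × Bool) |
              ∀ m ≤ j + 1, π m = w.1 ⟨min m (j + 1), by omega⟩} := by
        intro π hπ
        refine Set.mem_iUnion.mpr ⟨⟨fun m => π m.1, hπ⟩, ?_⟩
        intro m hm
        show π m = π (min m (j + 1))
        congr 1
        omega
      refine measure_mono_null hsubj (measure_iUnion_null ?_)
      rintro ⟨w, hw⟩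
      have e : {π : ℕ → (Fin (n + 1) ⊕ Fin n × Bool) |
          ∀ m ≤ j + 1, π m = w ⟨min m (j + 1), by omega⟩}
          = {π | ∀ m ≤ j + 1, π m = (fun m => w ⟨min m (j + 1), by omega⟩) m} := rfl
      rw [e, hcyl]
      refine mul_eq_zero.mpr (Or.inr ?_)
      refine Finset.prod_eq_zero (Finset.mem_range.mpr (by omega : j < j + 1)) ?_
      show P (w ⟨min j (j + 1), by omega⟩) (w ⟨min (j + 1) (j + 1), by omega⟩) = 0
      have e1 : (⟨min j (j + 1), by omega⟩ : Fin (j + 2)) = ⟨j, by omega⟩ := by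
        ext; simp
      have e2 : (⟨min (j + 1) (j + 1), by omega⟩ : Fin (j + 2)) = ⟨j + 1, by omega⟩ := by
        ext; simp
      rw [e1, e2, hw]
    -- extract a genuine path in the target event
    have hnotsub : ¬ ({π : ℕ → (Fin (n + 1) ⊕ Fin n × Bool) |
        ∀ i : Fin k, ∃ j ≤ v i, i ∈ Lab (π j)} ⊆
        {π | π 0 ≠ Sum.inl (0 : Fin (n + 1))} ∪ ⋃ j, {π | P (π j) (π (j + 1)) = 0}) := by
      intro hsub
      have : μ {π : ℕ → (Fin (n + 1) ⊕ Fin n × Bool) |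
          ∀ i : Fin k, ∃ j ≤ v i, i ∈ Lab (π j)} = 0 :=
        measure_mono_null hsub (measure_union_null hb0 (measure_iUnion_null hbj))
      rw [this] at hvpos
      exact lt_irrefl _ hvpos
    obtain ⟨π, hπT, hπG⟩ := Set.not_subset.mp hnotsub
    simp only [Set.mem_union, Set.mem_iUnion, Set.mem_setOf_eq, not_or, not_exists,
      not_ne_iff] at hπG
    obtain ⟨hG0, hGp⟩ := hπG
    have hGp' : ∀ j, 0 < P (π j) (π (j + 1)) := fun j => pos_iff_ne_zero.mpr (hGp j)
    -- the structure of a genuine path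
    have step : ∀ m (hm : m < n), π (2 * m) = Sum.inl ⟨m, by omega⟩ →
        ∃ b, π (2 * m + 1) = Sum.inr (⟨m, hm⟩, b) ∧
          π (2 * (m + 1)) = Sum.inl ⟨m + 1, by omega⟩ := by
      intro m hm hmk
      rcases hsupp _ _ (hGp' (2 * m)) with ⟨i, b, hs, ht⟩ | ⟨i, b, hs, ht⟩ | ⟨hs, ht⟩
      · rw [hmk] at hs
        have hi : i = ⟨m, hm⟩ := by
          have := congrArg Fin.val (Sum.inl.inj hs)
          ext
          simpa using this.symm
        subst hi
        refine ⟨b, ht, ?_⟩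
        have h2 := hGp' (2 * m + 1)
        rw [ht] at h2
        rcases hsupp _ _ h2 with ⟨i', b', hs', _⟩ | ⟨i', b', hs', ht'⟩ | ⟨hs', _⟩
        · exact absurd hs' (by simp)
        · obtain ⟨hi', hb'⟩ := Prod.mk.injEq .. ▸ Sum.inr.inj hs'
          have : π (2 * m + 1 + 1) = Sum.inl ((⟨m, hm⟩ : Fin n).succ) := by
            rw [ht', ← hi']
          have e : (2 : ℕ) * (m + 1) = 2 * m + 1 + 1 := by omega
          rw [e, this]
          congr 1
        · exact absurd hs' (by simp)
      · rw [hmk] at hs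
        exact absurd hs (by simp)
      · rw [hmk] at hs
        have := congrArg Fin.val (Sum.inl.inj hs)
        simp [Fin.last] at this
        omega
    have keyEven : ∀ m, ∀ (hm : m ≤ n), π (2 * m) = Sum.inl ⟨m, by omega⟩ := by
      intro m
      induction m with
      | zero =>
        intro _
        rw [show (2 : ℕ) * 0 = 0 from rfl, hG0]
        congr 1
      | succ m ih =>
        intro hm
        obtain ⟨b, _, h2⟩ := step m (by omega) (ih (by omega))
        exact h2
    have keyOdd : ∀ m (hm : m < n), ∃ b, π (2 * m + 1) = Sum.inr (⟨m, hm⟩, b) := by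
      intro m hm
      obtain ⟨b, h1, _⟩ := step m hm (keyEven m hm.le)
      exact ⟨b, h1⟩
    have keyBig : ∀ j, 2 * n ≤ j → π j = Sum.inl (Fin.last n) := by
      intro j
      induction j with
      | zero =>
        intro hj
        have hn : n = 0 := by omega
        subst hn
        rw [hG0]
        congr 1
      | succ j ih =>
        intro hj
        by_cases h : 2 * n ≤ j
        · have hp := ih h
          have h1 := hGp' j
          rw [hp] at h1
          rcases hsupp _ _ h1 with ⟨i, b, hs, _⟩ | ⟨i, b, hs, _⟩ | ⟨_, ht⟩
          · have := congrArg Fin.val (Sum.inl.inj hs)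
            have hiv := i.isLt
            simp [Fin.last] at this
            omega
          · exact absurd hs (by simp)
          · exact ht
        · have e : j + 1 = 2 * n := by omega
          rw [e, keyEven n le_rfl]
          congr 1
    -- the assignment read off from the path
    have hαex : ∀ m : Fin n, ∃ b, π (2 * m.1 + 1) = Sum.inr (m, b) := by
      intro m
      obtain ⟨b, hb⟩ := keyOdd m.1 m.isLt
      exact ⟨b, by rw [hb]⟩
    set α : Fin n → Bool := fun m => (hαex m).choose with hαdef
    have hαspec : ∀ m : Fin n, π (2 * m.1 + 1) = Sum.inr (m, α m) := fun m =>
      (hαex m).choose_spec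
    have uniq : ∀ j (m : Fin n) b, π j = Sum.inr (m, b) → b = α m := by
      intro j m b h
      by_cases hj : 2 * n ≤ j
      · rw [keyBig j hj] at h
        exact absurd h (by simp)
      · by_cases hpar : j % 2 = 0
        · have hle : j / 2 ≤ n := by omega
          have := keyEven (j / 2) hle
          rw [show 2 * (j / 2) = j by omega] at this
          rw [this] at h
          exact absurd h (by simp)
        · have hm2 : j / 2 < n := by omega
          obtain ⟨b', hb'⟩ := keyOdd (j / 2) hm2
          rw [show 2 * (j / 2) + 1 = j by omega] at hb'
          rw [hb'] at h
          obtain ⟨hm', hbb⟩ := Prod.mk.injEq .. ▸ Sum.inr.inj h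
          have hαm := hαspec m
          rw [← hm'] at hαm
          have : (2 : ℕ) * ((⟨j / 2, hm2⟩ : Fin n)).1 + 1 = j := by simp; omega
          rw [this, hb'] at hαm
          have hfin := (Prod.mk.injEq .. ▸ Sum.inr.inj hαm).2
          rw [← hbb, ← hm']
          exact hfin
    refine ⟨α, ?_⟩
    intro i
    obtain ⟨j, hjv, hjLab⟩ := hπT i
    cases hpj : π j with
    | inl x =>
      rw [hpj, hLs] at hjLab
      exact hjLab.elim
    | inr p =>
      obtain ⟨m, b⟩ := p
      rw [hpj, hLt] at hjLab
      obtain ⟨l, hcl⟩ := hjLab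
      refine ⟨l, ?_⟩
      rw [hcl]
      exact (uniq j m b hpj).symm
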